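/- Fix 1 ≤ r ≤ s and n = s + 1. Let 𝔸_a(Q,t) (1 ≤ a ≤ r) and Ω_i(Q,t) (0 ≤ i ≤ s) be n×n matrices with entries in ℂ[[Q^1,…,Q^r,t^0,…,t^s]] that pairwise commute and satisfy Q^b∂𝔸_a/∂Q^b = Q^a∂𝔸_b/∂Q^a, ∂Ω_i/∂t^j = ∂Ω_j/∂t^i, ∂𝔸_a/∂t^i = Q^a∂Ω_i/∂Q^a. Set p_a := 𝔸_a(0,0). Suppose (e_0, e_1, …, e_s) is a basis of ℂ^n such that Ω_i(Q,t)e_0 = e_i for all i, 𝔸_a(Q,t)e_0 = p_ae_0 for all a (identically in Q, t), and e_a = p_ae_0 for 1 ≤ a ≤ r. Then: (a) Ω_0(Q,t) = Id_n identically; (b) 𝔸_a(Q,t) = Ω_a(Q,t) for 1 ≤ a ≤ r; (c) ∂Ω_i/∂t^0 = 0 and (∂/∂t^a − Q^a∂/∂Q^a)Ω_i = 0 for all 0 ≤ i ≤ s and 1 ≤ a ≤ r; and (d) the fundamental solution L (satisfying ħ∂L/∂t^i + Ω_iL = 0, ħQ^a∂L/∂Q^a + 𝔸_aL − Lp_a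 = 0, L|_{Q=t=0} = Id) satisfies (∂/∂t^a − Q^a∂/∂Q^a)L + (1/ħ)·L p_a = 0 for 1 ≤ a ≤ r and ħ ∂L/∂t^0 + L = 0. -/

import Mathlib

noncomputable section

/-- `ℂ((ħ⁻¹))`, realized as formal Laurent series (Hahn series over `ℤ`) in the
variable `X = ħ⁻¹`; the coefficient of `ħ^k` is the coefficient at `z = -k`. -/
abbrev LH : Type := LaurentSeries ℂ

/-- The element `ħ = X⁻¹`: the Hahn series with single coefficient `1` in degree `-1`. -/
def hbar : LH := HahnSeries.single (-1 : ℤ) 1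

/-- `f` lies in the subring `ℂ[ħ]` (no positive powers of the variable `X = ħ⁻¹`). -/
def InPolyH (f : LH) : Prop := ∀ z : ℤ, 0 < z → f.coeff z = 0

/-- `f` lies in the subring `ℂ[[ħ⁻¹]]`. -/
def InPSinv (f : LH) : Prop := ∀ z : ℤ, z < 0 → f.coeff z = 0

/-- `f` lies in `ħ⁻¹ · ℂ[[ħ⁻¹]]` (only strictly negative powers of `ħ`). -/
def InPSinvPos (f : LH) : Prop := ∀ z : ℤ, z ≤ 0 → f.coeff z = 0

/-- `f` is a constant (a complex scalar), i.e. independent of `ħ`. -/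
def IsConstL (f : LH) : Prop := ∀ z : ℤ, z ≠ 0 → f.coeff z = 0

section ops

variable {σ R : Type} [CommRing R] {n : ℕ}

/-- Formal partial derivative `∂/∂x` on multivariate formal power series. -/
def pd (x : σ) (f : MvPowerSeries σ R) : MvPowerSeries σ R :=
  fun d => ((d x + 1 : ℕ) : R) * MvPowerSeries.coeff (R := R) (d + Finsupp.single x 1) f

/-- Euler derivative `x·∂/∂x` on multivariate formal power series. -/
def eulerD (x : σ) (f : MvPowerSeries σ R) : MvPowerSeries σ R :=
  fun d => ((d x : ℕ) : R) * MvPowerSeries.coeff (R := R) d f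

/-- Entrywise partial derivative of a matrix of power series. -/
def mpd (x : σ) (M : Matrix (Fin n) (Fin n) (MvPowerSeries σ R)) :
    Matrix (Fin n) (Fin n) (MvPowerSeries σ R) := M.map (pd x)

/-- Entrywise Euler derivative of a matrix of power series. -/
def meu (x : σ) (M : Matrix (Fin n) (Fin n) (MvPowerSeries σ R)) :
    Matrix (Fin n) (Fin n) (MvPowerSeries σ R) := M.map (eulerD x)

/-- A constant matrix, viewed as a matrix of power series. -/
def mC (M : Matrix (Fin n) (Fin n) R) : Matrix (Fin n) (Fin n) (MvPowerSeries σ R) :=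
  M.map (MvPowerSeries.C (σ := σ) (R := R))

/-- Constant term (restriction to `Q = t = 0`) of a matrix of power series. -/
def m0 (M : Matrix (Fin n) (Fin n) (MvPowerSeries σ R)) : Matrix (Fin n) (Fin n) R :=
  M.map (MvPowerSeries.constantCoeff (σ := σ) (R := R))

end ops

section lops

variable {σ : Type} {n : ℕ}

/-- The scalar `ħ` inside `ℂ((ħ⁻¹))[[Q,t]]`. -/
def hbarC (σ : Type) : MvPowerSeries σ LH := MvPowerSeries.C (σ := σ) (R := LH) hbar

/-- The entries of the matrix `M` lie in `ℂ[ħ][[Q,t]]`. -/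
def MatPolyH (M : Matrix (Fin n) (Fin n) (MvPowerSeries σ LH)) : Prop :=
  ∀ (i j : Fin n) (d : σ →₀ ℕ), InPolyH (MvPowerSeries.coeff (R := LH) d (M i j))

/-- The entries of the matrix `M` lie in `ℂ[[Q,t]]`, i.e. are independent of `ħ`. -/
def MatNoH (M : Matrix (Fin n) (Fin n) (MvPowerSeries σ LH)) : Prop :=
  ∀ (i j : Fin n) (d : σ →₀ ℕ), IsConstL (MvPowerSeries.coeff (R := LH) d (M i j))

/-- The first-order operator `v ↦ ħ·(x ∂/∂x)v + A·v` on column vectors. -/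
def nablaE (x : σ) (A : Matrix (Fin n) (Fin n) (MvPowerSeries σ LH))
    (v : Fin n → MvPowerSeries σ LH) : Fin n → MvPowerSeries σ LH :=
  fun i => hbarC σ * eulerD x (v i) + A.mulVec v i

/-- The first-order operator `v ↦ ħ·(∂/∂x)v + A·v` on column vectors. -/
def nablaP (x : σ) (A : Matrix (Fin n) (Fin n) (MvPowerSeries σ LH))
    (v : Fin n → MvPowerSeries σ LH) : Fin n → MvPowerSeries σ LH :=
  fun i => hbarC σ * pd x (v i) + A.mulVec v i

end lops

/-- The inclusion `ℂ[[Q,t]] → ℂ((ħ⁻¹))[[Q,t]]`, coefficientwise. -/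
def psL {σ : Type} (f : MvPowerSeries σ ℂ) : MvPowerSeries σ LH :=
  fun d => HahnSeries.C (MvPowerSeries.coeff (R := ℂ) d f)

/-- The inclusion of matrices over `ℂ[[Q,t]]` into matrices over `ℂ((ħ⁻¹))[[Q,t]]`. -/
def mL {σ : Type} {n : ℕ} (M : Matrix (Fin n) (Fin n) (MvPowerSeries σ ℂ)) :
    Matrix (Fin n) (Fin n) (MvPowerSeries σ LH) := M.map psL

/-- A complex matrix viewed as a constant matrix over `ℂ((ħ⁻¹))[[Q,t]]`. -/
def mCL {σ : Type} {n : ℕ} (M : Matrix (Fin n) (Fin n) ℂ) :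
    Matrix (Fin n) (Fin n) (MvPowerSeries σ LH) :=
  M.map (fun c => MvPowerSeries.C (σ := σ) (R := LH) (HahnSeries.C c))

lemma pd_zero {σ R : Type} [CommRing R] (x : σ) : pd x (0 : MvPowerSeries σ R) = 0 := by
  funext d; show ((d x + 1 : ℕ) : R) * MvPowerSeries.coeff (R := R) (d + Finsupp.single x 1) 0 = 0; simp

lemma pd_one {σ R : Type} [CommRing R] (x : σ) : pd x (1 : MvPowerSeries σ R) = 0 := by
  classical
  funext d
  have h : (d + Finsupp.single x 1) ≠ 0 := by
    intro h
    have := DFunLike.congr_fun h x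
    simp at this
  show ((d x + 1 : ℕ) : R) * MvPowerSeries.coeff (R := R) (d + Finsupp.single x 1) 1 = 0
  rw [MvPowerSeries.coeff_one, if_neg h, mul_zero]
  
lemma mpd_one {σ R : Type} [CommRing R] {n : ℕ} (x : σ) :
    mpd x (1 : Matrix (Fin n) (Fin n) (MvPowerSeries σ R)) = 0 := by
  ext i j
  simp only [mpd, Matrix.map_apply, Matrix.one_apply, Matrix.zero_apply]
  split
  · exact congrFun (pd_one x) _
  · exact congrFun (pd_zero x) _

lemma psL_zero {σ : Type} : psL (0 : MvPowerSeries σ ℂ) = 0 := by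
  funext d; show HahnSeries.C (MvPowerSeries.coeff (R := ℂ) d 0) = 0; simp

lemma psL_one {σ : Type} : psL (1 : MvPowerSeries σ ℂ) = 1 := by
  classical
  apply MvPowerSeries.ext
  intro d
  show HahnSeries.C (MvPowerSeries.coeff (R := ℂ) d 1) = MvPowerSeries.coeff (R := LH) d 1
  rw [MvPowerSeries.coeff_one, MvPowerSeries.coeff_one]
  split <;> simp

lemma mL_one {σ : Type} {n : ℕ} : mL (1 : Matrix (Fin n) (Fin n) (MvPowerSeries σ ℂ)) = 1 := by
  ext i j
  simp only [mL, Matrix.map_apply, Matrix.one_apply]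
  split <;> simp [psL_one, psL_zero]

lemma mulVec_basis_eq_zero {n : ℕ} {σ : Type}
    (e : Fin n → Fin n → ℂ) (heLI : LinearIndependent ℂ e)
    (heSpan : Submodule.span ℂ (Set.range e) = ⊤)
    (X : Matrix (Fin n) (Fin n) (MvPowerSeries σ ℂ))
    (hX : ∀ j, X.mulVec (fun k => MvPowerSeries.C (σ := σ) (R := ℂ) (e j k)) = 0) : X = 0 := by
  classical
  let b : Module.Basis (Fin n) ℂ (Fin n → ℂ) := Module.Basis.mk heLI (by rw [heSpan])
  let P := Pi.basisFun ℂ (Fin n)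
  let mCh := (MvPowerSeries.C (σ := σ) (R := ℂ)).mapMatrix (m := Fin n)
  have hXE : X * mCh (P.toMatrix e) = 0 := by
    ext i j
    have h := congrFun (hX j) i
    simp only [Matrix.zero_apply] at h ⊢
    rw [Matrix.mul_apply]
    rw [show (0 : MvPowerSeries σ ℂ) = X.mulVec (fun k => MvPowerSeries.C (σ := σ) (R := ℂ) (e j k)) i from h.symm]
    simp [Matrix.mulVec, dotProduct, mCh, RingHom.mapMatrix_apply, Matrix.map_apply,
      Module.Basis.toMatrix_apply, P, Pi.basisFun_repr]
  have h1 : P.toMatrix e * b.toMatrix ⇑P = 1 := by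
    have := Module.Basis.toMatrix_mul_toMatrix_flip P b
    rwa [Module.Basis.coe_mk] at this
  calc X = X * (mCh (P.toMatrix e) * mCh (b.toMatrix ⇑P)) := by
            rw [← map_mul, h1, map_one, mul_one]
    _ = (X * mCh (P.toMatrix e)) * mCh (b.toMatrix ⇑P) := by rw [mul_assoc]
    _ = 0 := by rw [hXE, zero_mul]

lemma matrixDivHelper7 {R : Type} [CommRing R] {n : ℕ} (h c : R) (hinv : c * h = 1)
    (X Y A P : Matrix (Fin n) (Fin n) R)
    (h1 : h • X = -A) (h2 : h • Y = P - A) : X - Y + c • P = 0 := by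
  have hD : h • (X - Y) = -P := by rw [smul_sub, h1, h2]; abel
  have hXY : X - Y = -(c • P) := by
    calc X - Y = (c * h) • (X - Y) := by rw [hinv, one_smul]
      _ = c • (h • (X - Y)) := by rw [smul_smul]
      _ = c • (-P) := by rw [hD]
      _ = -(c • P) := smul_neg _ _
  rw [hXY, neg_add_cancel]

/-- abstract string and divisor equations for a big abstract quantum
D-module in flat coordinates normalized by `℘₀e₀ = e₀`, `℘_a e₀ = p_a e₀`. -/
theorem statement7 (r s : ℕ) (hr : 1 ≤ r) (hrs : r ≤ s)
    (𝔸 : Fin r → Matrix (Fin (s + 1)) (Fin (s + 1)) (MvPowerSeries (Fin r ⊕ Fin (s + 1)) ℂ))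
    (Ω : Fin (s + 1) → Matrix (Fin (s + 1)) (Fin (s + 1)) (MvPowerSeries (Fin r ⊕ Fin (s + 1)) ℂ))
    -- the connection matrices pairwise commute and are integrable
    (hAA : ∀ a b, 𝔸 a * 𝔸 b = 𝔸 b * 𝔸 a)
    (hAO : ∀ a i, 𝔸 a * Ω i = Ω i * 𝔸 a)
    (hOO : ∀ i j, Ω i * Ω j = Ω j * Ω i)
    (hiQQ : ∀ a b, meu (Sum.inl b) (𝔸 a) = meu (Sum.inl a) (𝔸 b))
    (hiTT : ∀ i j, mpd (Sum.inr j) (Ω i) = mpd (Sum.inr i) (Ω j))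
    (hiQT : ∀ a i, mpd (Sum.inr i) (𝔸 a) = meu (Sum.inl a) (Ω i))
    -- `p_a := 𝔸_a(0,0)`
    (p : Fin r → Matrix (Fin (s + 1)) (Fin (s + 1)) ℂ) (hpdef : ∀ a, m0 (𝔸 a) = p a)
    -- a basis `(e_0, …, e_s)` of `ℂ^n`
    (e : Fin (s + 1) → Fin (s + 1) → ℂ)
    (heLI : LinearIndependent ℂ e)
    (heSpan : Submodule.span ℂ (Set.range e) = ⊤)
    -- `Ω_i(Q,t) e_0 = e_i` identically
    (hOe : ∀ i, (Ω i).mulVec (fun k => MvPowerSeries.C (σ := Fin r ⊕ Fin (s + 1)) (R := ℂ) (e 0 k))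
        = fun k => MvPowerSeries.C (σ := Fin r ⊕ Fin (s + 1)) (R := ℂ) (e i k))
    -- `𝔸_a(Q,t) e_0 = p_a e_0` identically
    (hAe : ∀ a, (𝔸 a).mulVec (fun k => MvPowerSeries.C (σ := Fin r ⊕ Fin (s + 1)) (R := ℂ) (e 0 k))
        = fun k => MvPowerSeries.C (σ := Fin r ⊕ Fin (s + 1)) (R := ℂ) ((p a).mulVec (e 0) k))
    -- `e_a = p_a e_0` for `1 ≤ a ≤ r`
    (hea : ∀ a : Fin r, e ⟨a.1 + 1, by omega⟩ = (p a).mulVec (e 0))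
    -- `L` is the normalized fundamental solution
    (L : Matrix (Fin (s + 1)) (Fin (s + 1)) (MvPowerSeries (Fin r ⊕ Fin (s + 1)) LH))
    (hLt : ∀ i, hbarC (Fin r ⊕ Fin (s + 1)) • mpd (Sum.inr i) L + mL (Ω i) * L = 0)
    (hLq : ∀ a, hbarC (Fin r ⊕ Fin (s + 1)) • meu (Sum.inl a) L + mL (𝔸 a) * L
                  - L * mCL (p a) = 0)
    (hL0 : m0 L = 1) :
    -- (a) `Ω_0 = Id`
    Ω 0 = 1 ∧
    -- (b) `𝔸_a = Ω_a` for `1 ≤ a ≤ r`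
    (∀ a : Fin r, 𝔸 a = Ω ⟨a.1 + 1, by omega⟩) ∧
    -- (c) `∂Ω_i/∂t^0 = 0` and `(∂/∂t^a − Q^a ∂/∂Q^a) Ω_i = 0`
    (∀ i, mpd (Sum.inr 0) (Ω i) = 0) ∧
    (∀ (a : Fin r) (i : Fin (s + 1)),
      mpd (Sum.inr ⟨a.1 + 1, by omega⟩) (Ω i) - meu (Sum.inl a) (Ω i) = 0) ∧
    -- (d) `(∂/∂t^a − Q^a ∂/∂Q^a) L + ħ⁻¹ L p_a = 0` and `ħ ∂L/∂t^0 + L = 0`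
    (∀ a : Fin r,
      mpd (Sum.inr ⟨a.1 + 1, by omega⟩) L - meu (Sum.inl a) L
        + MvPowerSeries.C (σ := Fin r ⊕ Fin (s + 1)) (R := LH) hbar⁻¹ • (L * mCL (p a)) = 0) ∧
    hbarC (Fin r ⊕ Fin (s + 1)) • mpd (Sum.inr 0) L + L = 0 := by
    classical
  have key : ∀ X : Matrix (Fin (s + 1)) (Fin (s + 1)) (MvPowerSeries (Fin r ⊕ Fin (s + 1)) ℂ),
      (∀ j, X * Ω j = Ω j * X) →
      X.mulVec (fun k => MvPowerSeries.C (σ := Fin r ⊕ Fin (s + 1)) (R := ℂ) (e 0 k)) = 0 → X = 0 := by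
    intro X hcomm h0
    apply mulVec_basis_eq_zero e heLI heSpan
    intro j
    rw [← hOe j, Matrix.mulVec_mulVec, hcomm j, ← Matrix.mulVec_mulVec, h0,
      Matrix.mulVec_zero]
  have ha : Ω 0 = 1 := by
    have h := key (Ω 0 - 1) (fun j => by rw [sub_mul, mul_sub, hOO, one_mul, mul_one])
      (by rw [Matrix.sub_mulVec, hOe 0, Matrix.one_mulVec, sub_self])
    rwa [sub_eq_zero] at h
  have hb : ∀ a : Fin r, 𝔸 a = Ω ⟨a.1 + 1, by omega⟩ := by
    intro a
    have h := key (𝔸 a - Ω ⟨a.1 + 1, by omega⟩)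
      (fun j => by rw [sub_mul, mul_sub, hAO, hOO])
      (by rw [Matrix.sub_mulVec, hAe a, hOe ⟨a.1 + 1, by omega⟩, hea a, sub_self])
    rwa [sub_eq_zero] at h
  have hc1 : ∀ i, mpd (Sum.inr 0) (Ω i) = 0 := by
    intro i
    rw [hiTT i 0, ha, mpd_one]
  have hc2 : ∀ (a : Fin r) (i : Fin (s + 1)),
      mpd (Sum.inr ⟨a.1 + 1, by omega⟩) (Ω i) - meu (Sum.inl a) (Ω i) = 0 := by
    intro a i
    rw [hiTT i ⟨a.1 + 1, by omega⟩, ← hb a, hiQT, sub_self]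
  refine ⟨ha, hb, hc1, hc2, ?_, ?_⟩
  · intro a
    have hbne : hbar ≠ 0 := HahnSeries.single_ne_zero one_ne_zero
    have h1 : hbarC (Fin r ⊕ Fin (s + 1)) • mpd (Sum.inr ⟨a.1 + 1, by omega⟩) L
        = -(mL (𝔸 a) * L) := by
      rw [hb a]
      exact eq_neg_of_add_eq_zero_left (hLt ⟨a.1 + 1, by omega⟩)
    have h2 : hbarC (Fin r ⊕ Fin (s + 1)) • meu (Sum.inl a) L
        = L * mCL (p a) - mL (𝔸 a) * L :=
      eq_sub_of_add_eq (sub_eq_zero.mp (hLq a))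
    have hinv : MvPowerSeries.C (σ := Fin r ⊕ Fin (s + 1)) (R := LH) hbar⁻¹
        * hbarC (Fin r ⊕ Fin (s + 1)) = 1 := by
      rw [hbarC, ← map_mul, inv_mul_cancel₀ hbne, map_one]
    exact matrixDivHelper7 _ _ hinv _ _ _ _ h1 h2
  · have h := hLt 0
    rwa [ha, mL_one, one_mul] at h
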